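/- For n ≥ 2, the ratio of derangements to permutations on the complete bipartite graph K_{n,n} is strictly greater than the ratio of derangements to permutations on the complete graph K_{2n}; equivalently, (Σ_{k=0}^{n} 1/(k!)^2)^{-1} > D_{2n}/(Σ_{k=0}^{2n} C(2n,k)·D_k), where D_m is the number of derangements of an m-element set. -/

import Mathlib

lemma factsq_ge (n : ℕ) : 4 ^ n ≤ ((n + 1).factorial) ^ 2 := by
  induction n with
  | zero => simp [Nat.factorial]
  | succ n ih =>
    have h : (n + 2).factorial = (n + 2) * (n + 1).factorial := rfl
    rw [h, pow_succ, mul_pow]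
    have h4 : 4 ≤ (n + 2) ^ 2 := by nlinarith
    calc 4 ^ n * 4 ≤ (n + 1).factorial ^ 2 * ((n + 2) ^ 2) := by
          exact Nat.mul_le_mul ih h4
      _ = (n + 2) ^ 2 * (n + 1).factorial ^ 2 := by ring

lemma Tle (n : ℕ) :
    ∑ k ∈ Finset.range (n + 1), (1 : ℚ) / (Nat.factorial k) ^ 2 ≤
      7 / 3 - (4 / 3) * (1 / 4) ^ n := by
  induction n with
  | zero => norm_num [Nat.factorial]
  | succ n ih =>
    rw [Finset.sum_range_succ]
    have h4 : (0 : ℚ) < 4 ^ n := by positivity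
    have hf : (4 : ℚ) ^ n ≤ ((n + 1).factorial : ℚ) ^ 2 := by
      exact_mod_cast factsq_ge n
    have hterm : (1 : ℚ) / ((n + 1).factorial : ℚ) ^ 2 ≤ 1 / 4 ^ n := by
      apply one_div_le_one_div_of_le h4 hf
    have hpow : ((1 : ℚ) / 4) ^ n = 1 / 4 ^ n := by
      rw [div_pow, one_pow]
    have hpow' : ((1 : ℚ) / 4) ^ (n + 1) = (1 / 4) * (1 / 4) ^ n := by ring
    rw [hpow']
    push_cast at hterm ⊢
    nlinarith [hterm, ih, hpow]

/-- `(d/p)_{K_{n,n}} > (d/p)_{K_{2n}}` for `n ≥ 2`, in the equivalent numerical form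
`(∑_{k=0}^n 1/(k!)²)⁻¹ > D_{2n} / ∑_{k=0}^{2n} C(2n,k) D_k`. -/
theorem stmt_18 (n : ℕ) (hn : 2 ≤ n) :
    ((numDerangements (2 * n) : ℚ) /
        ∑ k ∈ Finset.range (2 * n + 1), ((2 * n).choose k * numDerangements k : ℚ)) <
      (∑ k ∈ Finset.range (n + 1), (1 : ℚ) / (Nat.factorial k) ^ 2)⁻¹ := by
  obtain ⟨m, rfl⟩ : ∃ m, n = m + 2 := ⟨n - 2, by omega⟩
  rw [show 2 * (m + 2) = 2 * m + 4 from by ring]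
  set T : ℚ := ∑ k ∈ Finset.range (m + 2 + 1), (1 : ℚ) / (Nat.factorial k) ^ 2 with hTdef
  set S : ℚ := ∑ k ∈ Finset.range (2 * m + 4 + 1),
      ((2 * m + 4).choose k * numDerangements k : ℚ) with hSdef
  -- abbreviations
  set a : ℚ := (numDerangements (2 * m + 2) : ℚ) with hadef
  set b : ℚ := (numDerangements (2 * m + 3) : ℚ) with hbdef
  set d : ℚ := (numDerangements (2 * m + 4) : ℚ) with hddef
  have ha0 : 0 ≤ a := by positivity
  have hb0 : 0 ≤ b := by positivity
  have hd0 : 0 ≤ d := by positivity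
  -- recurrences
  have h1 : d = (2 * m + 4) * b + 1 := by
    have := numDerangements_succ (2 * m + 3)
    have hodd : (-1 : ℤ) ^ (2 * m + 3) = -1 := Odd.neg_one_pow ⟨m + 1, by ring⟩
    rw [hodd] at this
    have : (2 * m + 3 + 1 : ℕ) = 2 * m + 4 := by norm_num
    rw [hddef, hbdef]
    have h := numDerangements_succ (2 * m + 3)
    rw [hodd] at h
    have h' : (numDerangements (2 * m + 4) : ℤ) = (2 * m + 4) * (numDerangements (2 * m + 3) : ℤ) + 1 := by
      push_cast at h ⊢
      linarith [h]
    exact_mod_cast h'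
  have h2 : b = (2 * m + 3) * a - 1 := by
    have heven : (-1 : ℤ) ^ (2 * m + 2) = 1 := Even.neg_one_pow ⟨m + 1, by ring⟩
    have h := numDerangements_succ (2 * m + 2)
    rw [heven] at h
    have h' : (numDerangements (2 * m + 3) : ℤ) = (2 * m + 3) * (numDerangements (2 * m + 2) : ℤ) - 1 := by
      push_cast at h ⊢
      linarith [h]
    rw [hbdef, hadef]
    exact_mod_cast h'
  -- lower bound for S by last three terms
  have hS : d + (2 * m + 4) * b + ((m + 2) * (2 * m + 3)) * a ≤ S := by
    have hrange : 2 * m + 4 + 1 = (2 * m + 2) + 1 + 1 + 1 := by omega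
    rw [hSdef, hrange, Finset.sum_range_succ, Finset.sum_range_succ, Finset.sum_range_succ]
    have hc4 : (2 * m + 4).choose (2 * m + 2 + 1 + 1) = 1 := by
      have : 2 * m + 2 + 1 + 1 = 2 * m + 4 := by omega
      rw [this, Nat.choose_self]
    have hc3 : (2 * m + 4).choose (2 * m + 2 + 1) = 2 * m + 4 := by
      have h1' : 2 * m + 4 = (2 * m + 3) + 1 := by omega
      have h1'' : 2 * m + 2 + 1 = 2 * m + 3 := by omega
      rw [h1', h1'', Nat.choose_succ_self_right]
    have hc2 : (2 * m + 4).choose (2 * m + 2) = (m + 2) * (2 * m + 3) := by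
      have h2' : 2 * m + 2 = (2 * m + 4) - 2 := by omega
      rw [h2', Nat.choose_symm (by omega), Nat.choose_two_right]
      have e1 : 2 * m + 4 - 1 = 2 * m + 3 := by omega
      rw [e1, show 2 * m + 4 = 2 * (m + 2) from by omega, mul_assoc]
      rw [Nat.mul_div_cancel_left _ (by norm_num : 0 < 2)]
    have hnn : 0 ≤ ∑ k ∈ Finset.range (2 * m + 2),
        ((2 * m + 4).choose k * numDerangements k : ℚ) := by
      apply Finset.sum_nonneg
      intro i _
      positivity
    rw [hc4, hc3, hc2]
    have hi2 : (2 * m + 2 + 1 + 1 : ℕ) = 2 * m + 4 := by omega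
    have hi1 : (2 * m + 2 + 1 : ℕ) = 2 * m + 3 := by omega
    rw [hi2, hi1]
    push_cast
    rw [← hadef, ← hbdef, ← hddef]
    nlinarith [hnn]
  -- bounds
  have hd1 : 1 ≤ d := by nlinarith [h1, hb0]
  have hT73 : T < 7 / 3 := by
    have := Tle (m + 2)
    have hp : (0 : ℚ) < (1 / 4 : ℚ) ^ (m + 2) := by positivity
    rw [hTdef]
    linarith
  have hT0 : 0 < T := by
    rw [hTdef]
    apply Finset.sum_pos
    · intro i _
      positivity
    · exact ⟨0, Finset.mem_range.mpr (by omega)⟩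
  have hS0 : 0 < S := by nlinarith
  have key : d * T < S := by
    have h73 : d * T < (7 / 3) * d := by nlinarith
    nlinarith
  rw [div_lt_iff₀ hS0] at *
  rw [← div_eq_inv_mul, lt_div_iff₀ hT0]
  linarith [key]
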